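/- For any integers 1 ≤ j ≤ t ≤ T and any real 0 < α ≤ 1/2, it holds that (1/(T−j+1)) · Σ_{k=j+1}^{t} k^{−α} ≤ 2/T^α. -/
import Mathlib


/-- Telescoping sum over `Icc (j+1) t`. -/
lemma tele_sum (g : ℕ → ℝ) (j t : ℕ) (h : j ≤ t) :
    ∑ k ∈ Finset.Icc (j + 1) t, (g k - g (k - 1)) = g t - g j := by
  induction t, h using Nat.le_induction with
  | base => simp [Finset.Icc_eq_empty_of_lt (Nat.lt_succ_self j)]
  | succ t ht ih =>
      rw [← Finset.insert_Icc_right_eq_Icc_add_one (by omega),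
        Finset.sum_insert (by simp), ih]
      simp only [Nat.add_sub_cancel]
      ring

/-- Key pointwise estimate: for real `x ≥ 1` and `0 < α ≤ 1/2`,
`x^(-α) ≤ 2 * (x^(1-α) - (x-1)^(1-α))`. -/
lemma pointwise_bound {x α : ℝ} (hx : 1 ≤ x) (hα0 : 0 < α) (hα : α ≤ 1 / 2) :
    x ^ (-α) ≤ 2 * (x ^ (1 - α) - (x - 1) ^ (1 - α)) := by
  have hx0 : (0 : ℝ) < x := lt_of_lt_of_le one_pos hx
  have h1α0 : (0 : ℝ) ≤ 1 - α := by linarith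
  -- (x-1)^(1-α) = x^(1-α) * (1 - 1/x)^(1-α)
  have hfac : x - 1 = x * (1 + (-(1 / x))) := by field_simp; ring
  have hsge : (-1 : ℝ) ≤ -(1 / x) := by
    have : 1 / x ≤ 1 := by
      rw [div_le_one hx0]; exact hx
    linarith
  have hs0 : (0 : ℝ) ≤ 1 + (-(1 / x)) := by linarith
  have hbern : (1 + (-(1 / x))) ^ (1 - α) ≤ 1 + (1 - α) * (-(1 / x)) :=
    rpow_one_add_le_one_add_mul_self hsge h1α0 (by linarith)
  have hxp : (0 : ℝ) < x ^ (1 - α) := Real.rpow_pos_of_pos hx0 _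
  have hmul : (x - 1) ^ (1 - α) = x ^ (1 - α) * (1 + (-(1 / x))) ^ (1 - α) := by
    rw [hfac, Real.mul_rpow hx0.le hs0]
  have h2 : (x - 1) ^ (1 - α) ≤ x ^ (1 - α) * (1 + (1 - α) * (-(1 / x))) := by
    rw [hmul]
    exact mul_le_mul_of_nonneg_left hbern hxp.le
  -- x^(1-α) / x = x^(-α)
  have hdiv : x ^ (1 - α) * (1 / x) = x ^ (-α) := by
    rw [one_div, ← Real.rpow_neg_one x, ← Real.rpow_add hx0]
    ring_nf
  have h3 : x ^ (1 - α) - (x - 1) ^ (1 - α) ≥ (1 - α) * x ^ (-α) := by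
    have := h2
    nlinarith [hdiv, hxp]
  have hxneg : (0 : ℝ) < x ^ (-α) := Real.rpow_pos_of_pos hx0 _
  nlinarith [h3, hxneg]

/- STATEMENT 2: for integers 1 ≤ j ≤ t ≤ T and real 0 < α ≤ 1/2,
   (1/(T-j+1)) · Σ_{k=j+1}^{t} k^{-α} ≤ 2/T^α. -/
theorem stmt_2
    (T j t : ℕ) (hj : 1 ≤ j) (hjt : j ≤ t) (htT : t ≤ T)
    (α : ℝ) (hα0 : 0 < α) (hα : α ≤ 1 / 2) :
    (1 / ((T : ℝ) - (j : ℝ) + 1)) * ∑ k ∈ Finset.Icc (j + 1) t, ((k : ℝ)) ^ (-α)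
      ≤ 2 / (T : ℝ) ^ α := by
  have hjT : j ≤ T := hjt.trans htT
  have hj1 : (1 : ℝ) ≤ (j : ℝ) := by exact_mod_cast hj
  have hjTc : (j : ℝ) ≤ (T : ℝ) := by exact_mod_cast hjT
  have hT0 : (0 : ℝ) < (T : ℝ) := lt_of_lt_of_le one_pos (hj1.trans hjTc)
  have hD : (0 : ℝ) < (T : ℝ) - (j : ℝ) + 1 := by linarith
  set g : ℕ → ℝ := fun k => (k : ℝ) ^ (1 - α) with hg
  -- termwise bound
  have hterm : ∀ k ∈ Finset.Icc (j + 1) t,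
      ((k : ℝ)) ^ (-α) ≤ 2 * (g k - g (k - 1)) := by
    intro k hk
    rw [Finset.mem_Icc] at hk
    have hk1 : 1 ≤ k := le_trans (by omega) hk.1
    have hcast : ((k - 1 : ℕ) : ℝ) = (k : ℝ) - 1 := by
      rw [Nat.cast_sub hk1, Nat.cast_one]
    have hkc : (1 : ℝ) ≤ (k : ℝ) := by exact_mod_cast hk1
    simpa [hg, hcast] using pointwise_bound hkc hα0 hα
  have hsum : ∑ k ∈ Finset.Icc (j + 1) t, ((k : ℝ)) ^ (-α)
      ≤ 2 * (g t - g j) := by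
    calc ∑ k ∈ Finset.Icc (j + 1) t, ((k : ℝ)) ^ (-α)
        ≤ ∑ k ∈ Finset.Icc (j + 1) t, 2 * (g k - g (k - 1)) :=
          Finset.sum_le_sum hterm
      _ = 2 * ∑ k ∈ Finset.Icc (j + 1) t, (g k - g (k - 1)) := by
          rw [Finset.mul_sum]
      _ = 2 * (g t - g j) := by rw [tele_sum g j t hjt]
  -- g t ≤ g T
  have hgt : g t ≤ g T := by
    apply Real.rpow_le_rpow (by positivity) (by exact_mod_cast htT) (by linarith)
  -- g T - g j ≤ (T - j) * T^(-α)
  have hTsplit : (T : ℝ) ^ (1 - α) = (T : ℝ) * (T : ℝ) ^ (-α) := by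
    rw [show (1 : ℝ) - α = 1 + (-α) by ring, Real.rpow_add hT0, Real.rpow_one]
  have hj0 : (0 : ℝ) < (j : ℝ) := by linarith
  have hjsplit : (j : ℝ) ^ (1 - α) = (j : ℝ) * (j : ℝ) ^ (-α) := by
    rw [show (1 : ℝ) - α = 1 + (-α) by ring, Real.rpow_add hj0, Real.rpow_one]
  have hmono : (T : ℝ) ^ (-α) ≤ (j : ℝ) ^ (-α) :=
    Real.rpow_le_rpow_of_nonpos (by linarith) hjTc (by linarith)
  have hkey : g T - g j ≤ ((T : ℝ) - (j : ℝ)) * (T : ℝ) ^ (-α) := by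
    simp only [hg]
    rw [hTsplit, hjsplit]
    have : (j : ℝ) * (T : ℝ) ^ (-α) ≤ (j : ℝ) * (j : ℝ) ^ (-α) :=
      mul_le_mul_of_nonneg_left hmono (by linarith)
    nlinarith
  have hTneg : (0 : ℝ) < (T : ℝ) ^ (-α) := Real.rpow_pos_of_pos hT0 _
  have hS : ∑ k ∈ Finset.Icc (j + 1) t, ((k : ℝ)) ^ (-α)
      ≤ ((T : ℝ) - (j : ℝ) + 1) * (2 * (T : ℝ) ^ (-α)) := by
    calc ∑ k ∈ Finset.Icc (j + 1) t, ((k : ℝ)) ^ (-α)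
        ≤ 2 * (g t - g j) := hsum
      _ ≤ 2 * (g T - g j) := by nlinarith
      _ ≤ 2 * (((T : ℝ) - (j : ℝ)) * (T : ℝ) ^ (-α)) := by nlinarith
      _ ≤ ((T : ℝ) - (j : ℝ) + 1) * (2 * (T : ℝ) ^ (-α)) := by nlinarith
  have hfinal : (1 / ((T : ℝ) - (j : ℝ) + 1)) *
      ∑ k ∈ Finset.Icc (j + 1) t, ((k : ℝ)) ^ (-α) ≤ 2 * (T : ℝ) ^ (-α) := by
    rw [div_mul_eq_mul_div, one_mul, div_le_iff₀ hD]
    calc ∑ k ∈ Finset.Icc (j + 1) t, ((k : ℝ)) ^ (-α)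
        ≤ ((T : ℝ) - (j : ℝ) + 1) * (2 * (T : ℝ) ^ (-α)) := hS
      _ = 2 * (T : ℝ) ^ (-α) * ((T : ℝ) - (j : ℝ) + 1) := by ring
  calc (1 / ((T : ℝ) - (j : ℝ) + 1)) *
      ∑ k ∈ Finset.Icc (j + 1) t, ((k : ℝ)) ^ (-α)
      ≤ 2 * (T : ℝ) ^ (-α) := hfinal
    _ = 2 / (T : ℝ) ^ α := by
        rw [Real.rpow_neg hT0.le, div_eq_mul_inv]
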